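/- (Large-v₁ asymptotics of the double Yukawa parameters.) Fix κ₁ > 0 and for v₁ > e^{κ₁}/κ₁ define κ₂(v₁) := (κ₁·v₁ − e^{κ₁})/(v₁ + e^{κ₁}) and v₂(v₁) := e^{κ₂(v₁) − κ₁}·(1 + κ₁)·v₁/(1 + κ₂(v₁)). Then, as v₁ → ∞: κ₂(v₁) = κ₁ − (1 + κ₁)·e^{κ₁}/v₁ + O(1/v₁²) and v₂(v₁) = v₁ − κ₁·e^{κ₁} + O(1/v₁). -/

import Mathlib

open Asymptotics Filter

/-- Large-`v₁` asymptotics of the double Yukawa parameters: for fixed `κ₁ > 0`,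
`κ₂(v₁) = κ₁ − (1+κ₁)e^{κ₁}/v₁ + O(1/v₁²)` and `v₂(v₁) = v₁ − κ₁e^{κ₁} + O(1/v₁)`
as `v₁ → ∞`. -/
theorem double_yukawa_large_v1_asymptotics (κ₁ : ℝ) (hκ₁ : 0 < κ₁) :
    let κ₂ : ℝ → ℝ := fun v₁ => (κ₁ * v₁ - Real.exp κ₁) / (v₁ + Real.exp κ₁)
    let v₂ : ℝ → ℝ := fun v₁ => Real.exp (κ₂ v₁ - κ₁) * (1 + κ₁) * v₁ / (1 + κ₂ v₁)
    ((fun v₁ => κ₂ v₁ - (κ₁ - (1 + κ₁) * Real.exp κ₁ / v₁)) =O[atTop]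
        fun v₁ => 1 / v₁ ^ 2) ∧
      (fun v₁ => v₂ v₁ - (v₁ - κ₁ * Real.exp κ₁)) =O[atTop] fun v₁ => 1 / v₁ := by
  intro κ₂ v₂
  set E := Real.exp κ₁ with hE
  have hE0 : 0 < E := Real.exp_pos _
  have ha : (0:ℝ) < 1 + κ₁ := by linarith
  constructor
  · apply IsBigO.of_bound ((1 + κ₁) * E * E)
    filter_upwards [eventually_gt_atTop 0] with v hv
    have hvE : (0:ℝ) < v + E := by positivity
    have h1 : κ₂ v - (κ₁ - (1 + κ₁) * E / v) = (1 + κ₁) * E * E / (v * (v + E)) := by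
      simp only [κ₂, ← hE]
      field_simp
      ring
    rw [h1]
    simp only [Real.norm_eq_abs]
    rw [abs_of_pos (by positivity), abs_of_pos (by positivity : (0:ℝ) < 1 / v ^ 2)]
    rw [mul_one_div]
    gcongr
    nlinarith [mul_pos hv hE0]
  · apply IsBigO.of_bound ((1 + κ₁) ^ 2 * E ^ 2)
    filter_upwards [eventually_ge_atTop (max 1 ((1 + κ₁) * E))] with v hv
    have hv1 : (1:ℝ) ≤ v := le_trans (le_max_left _ _) hv
    have hv0 : (0:ℝ) < v := by linarith
    have hvE : (0:ℝ) < v + E := by positivity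
    set δ : ℝ := -((1 + κ₁) * E / (v + E)) with hδ
    have hδabs : |δ| ≤ 1 := by
      rw [hδ, abs_neg, abs_of_nonneg (by positivity)]
      rw [div_le_one hvE]
      have : (1 + κ₁) * E ≤ v := le_trans (le_max_right _ _) hv
      linarith
    have hκ₂ : κ₂ v = κ₁ + δ := by
      simp only [κ₂, ← hE, hδ]
      field_simp
      ring
    have hv₂ : v₂ v = Real.exp δ * (v + E) := by
      simp only [v₂, ← hE, hκ₂]
      rw [add_sub_cancel_left]
      have h1 : 1 + (κ₁ + δ) = (1 + κ₁) * v / (v + E) := by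
        rw [hδ]; field_simp; ring
      rw [h1]
      have h2 : (1 + κ₁) ≠ 0 := ne_of_gt ha
      field_simp
    have hr := Real.abs_exp_sub_one_sub_id_le hδabs
    have hg : v₂ v - (v - κ₁ * E) = (v + E) * (Real.exp δ - 1 - δ) := by
      rw [hv₂, hδ]
      field_simp
      ring
    rw [hg]
    simp only [Real.norm_eq_abs]
    have habs : |1 / v| = 1 / v := abs_of_pos (by positivity)
    calc |(v + E) * (Real.exp δ - 1 - δ)| = (v + E) * |Real.exp δ - 1 - δ| := by
          rw [abs_mul, abs_of_pos hvE]
      _ ≤ (v + E) * δ ^ 2 := by gcongr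
      _ = (1 + κ₁) ^ 2 * E ^ 2 / (v + E) := by
          rw [hδ]; field_simp
      _ ≤ (1 + κ₁) ^ 2 * E ^ 2 * |1 / v| := by
          rw [habs, mul_one_div]
          gcongr
          linarith
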